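/- For every T > 0, E[V_T²] = b² E[U_T²] + e^{−bT} g(T) − b e^{−bT} ∫₀^T e^{bs} g(s) ds + b ∫₀^T e^{−bs} g(s) ds. -/

import Mathlib

open MeasureTheory Filter

theorem var_V_formula
    {Ω : Type*} [MeasurableSpace Ω] (P : Measure Ω) [IsProbabilityMeasure P]
    (b α2 : ℝ) (hb : 0 < b) (hα2 : 0 < α2)
    (g : ℝ → ℝ)
    (hg_cont : ContinuousOn g (Set.Ici 0))
    (hg_bdd : ∃ C, ∀ t, 0 ≤ t → |g t| ≤ C)
    (hg_nonneg : ∀ t, 0 ≤ t → 0 ≤ g t)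
    (hg_zero : g 0 = 0)
    (hg_lim : Tendsto g atTop (nhds α2))
    (B : ℝ → Ω → ℝ)
    (hB_meas : Measurable fun p : ℝ × Ω => B p.1 p.2)
    (hB_cont : ∀ᵐ ω ∂P, Continuous fun t => B t ω)
    (hB_zero : ∀ ω, B 0 ω = 0)
    (hB_mean : ∀ t, 0 ≤ t → ∫ ω, B t ω ∂P = 0)
    (hB_cov : ∀ s, 0 ≤ s → ∀ t, 0 ≤ t →
      ∫ ω, B s ω * B t ω ∂P = (g t + g s - g |t - s|) / 2)
    (U : ℝ → Ω → ℝ)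
    (hU : ∀ T ω, U T ω = Real.exp (-b * T) * ∫ t in (0:ℝ)..T, Real.exp (b * t) * B t ω)
    (V : ℝ → Ω → ℝ)
    (hV : ∀ T ω, V T ω = B T ω - b * U T ω)
    :
    ∀ T, 0 < T →
      ∫ ω, (V T ω) ^ 2 ∂P =
        b ^ 2 * (∫ ω, (U T ω) ^ 2 ∂P) + Real.exp (-b * T) * g T
          - b * Real.exp (-b * T) * (∫ s in (0:ℝ)..T, Real.exp (b * s) * g s)
          + b * ∫ s in (0:ℝ)..T, Real.exp (-b * s) * g s := by
  obtain ⟨C, hC⟩ := hg_bdd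
  have hg_pos : ∀ t, 0 < t → 0 < g t := by
    have hBt : ∀ t : ℝ, Measurable (fun ω => B t ω) :=
      fun t => hB_meas.comp measurable_prodMk_left
    have hvar_eq : ∀ t, 0 ≤ t → ∫ ω, (B t ω) ^ 2 ∂P = g t := by
      intro t ht
      have h := hB_cov t ht t ht
      simp only [sub_self, abs_zero, hg_zero] at h
      calc ∫ ω, (B t ω) ^ 2 ∂P = ∫ ω, B t ω * B t ω ∂P := by
            apply integral_congr_ae (ae_of_all _ fun ω => by ring)
        _ = g t := by rw [h]; ring
    have hint_sq_pos : ∀ t, 0 ≤ t → g t ≠ 0 → Integrable (fun ω => (B t ω) ^ 2) P := by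
      intro t ht hgt
      by_contra h
      exact hgt (by rw [← hvar_eq t ht, integral_undef h])
    intro t₀ ht₀
    by_contra hcon
    have hz : g t₀ = 0 := le_antisymm (not_lt.1 hcon) (hg_nonneg t₀ ht₀.le)
    set Z : Set ℝ := {t | 0 ≤ t ∧ g t = 0} with hZdef
    have hne : Z.Nonempty := ⟨t₀, ht₀.le, hz⟩
    obtain ⟨N, hN⟩ := eventually_atTop.1 (hg_lim.eventually (eventually_gt_nhds (by linarith : α2 / 2 < α2)))
    have hbdd : BddAbove Z := by
      refine ⟨N, fun z hzZ => ?_⟩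
      by_contra hzN
      have := hN z (le_of_not_ge hzN)
      rw [hzZ.2] at this
      linarith
    set v := sSup Z with hv
    have ht₀v : t₀ ≤ v := le_csSup hbdd ⟨ht₀.le, hz⟩
    have hv0 : 0 < v := lt_of_lt_of_le ht₀ ht₀v
    obtain ⟨u, hu_mono, hu_tend, hu_mem⟩ := exists_seq_tendsto_sSup hne hbdd
    have hgv : g v = 0 := by
      have h1 : Tendsto (fun n => g (u n)) atTop (nhds (g v)) := by
        refine (hg_cont v hv0.le).tendsto.comp ?_
        exact tendsto_nhdsWithin_of_tendsto_nhds_of_eventually_within _ hu_tend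
          (Eventually.of_forall fun n => (hu_mem n).1)
      have h2 : (fun n => g (u n)) = fun _ => (0 : ℝ) := funext fun n => (hu_mem n).2
      rw [h2] at h1
      exact tendsto_nhds_unique h1 tendsto_const_nhds
    -- B v = 0 a.e.
    set s : ℕ → ℝ := fun n => v + 1 / (n + 1) with hs
    have hs_gt : ∀ n, v < s n := fun n => by
      have : (0:ℝ) < 1 / (n + 1) := by positivity
      simp only [hs]; linarith
    have hs_nonneg : ∀ n, (0:ℝ) ≤ s n := fun n => le_of_lt (lt_trans hv0 (hs_gt n))
    have hs_pos : ∀ n, 0 < g (s n) := by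
      intro n
      rcases (hg_nonneg _ (hs_nonneg n)).lt_or_eq with h | h
      · exact h
      · exact absurd (le_csSup hbdd ⟨hs_nonneg n, h.symm⟩) (not_le.2 (hs_gt n))
    have hs_tend : Tendsto s atTop (nhds v) := by
      have : Tendsto (fun n : ℕ => 1 / ((n:ℝ) + 1)) atTop (nhds 0) :=
        tendsto_one_div_add_atTop_nhds_zero_nat
      simpa [hs] using tendsto_const_nhds.add this
    have hgs_tend : Tendsto (fun n => g (s n)) atTop (nhds 0) := by
      rw [← hgv]
      refine (hg_cont v hv0.le).tendsto.comp ?_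
      exact tendsto_nhdsWithin_of_tendsto_nhds_of_eventually_within _ hs_tend
        (Eventually.of_forall fun n => hs_nonneg n)
    have hBv : ∀ᵐ ω ∂P, B v ω = 0 := by
      have hmeas : ∀ n, Measurable fun ω => ENNReal.ofReal ((B (s n) ω) ^ 2) :=
        fun n => ((hBt (s n)).pow_const 2).ennreal_ofReal
      have hlin : ∀ n, ∫⁻ ω, ENNReal.ofReal ((B (s n) ω) ^ 2) ∂P = ENNReal.ofReal (g (s n)) := by
        intro n
        rw [← ofReal_integral_eq_lintegral_ofReal (hint_sq_pos _ (hs_nonneg n) (hs_pos n).ne')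
          (ae_of_all _ fun ω => sq_nonneg _), hvar_eq _ (hs_nonneg n)]
      have hF : ∫⁻ ω, ENNReal.ofReal ((B v ω) ^ 2) ∂P = 0 := by
        have hle := lintegral_liminf_le (μ := P) (u := atTop) hmeas
        have hlim : Filter.liminf (fun n => ∫⁻ ω, ENNReal.ofReal ((B (s n) ω) ^ 2) ∂P) atTop = 0 := by
          simp only [hlin]
          have : Tendsto (fun n => ENNReal.ofReal (g (s n))) atTop (nhds 0) := by
            simpa [Function.comp_def] using (ENNReal.continuous_ofReal.tendsto 0).comp hgs_tend
          exact this.liminf_eq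
        have hcongr : ∫⁻ ω, Filter.liminf (fun n => ENNReal.ofReal ((B (s n) ω) ^ 2)) atTop ∂P
            = ∫⁻ ω, ENNReal.ofReal ((B v ω) ^ 2) ∂P := by
          refine lintegral_congr_ae ?_
          filter_upwards [hB_cont] with ω hω
          have : Tendsto (fun n => ENNReal.ofReal ((B (s n) ω) ^ 2)) atTop
              (nhds (ENNReal.ofReal ((B v ω) ^ 2))) := by
            refine (ENNReal.continuous_ofReal.tendsto _).comp ?_
            exact ((continuous_pow 2).tendsto _).comp ((hω.tendsto v).comp hs_tend)
          exact this.liminf_eq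
        rw [← hcongr]
        exact le_antisymm (le_trans hle (le_of_eq hlim)) zero_le
      rw [lintegral_eq_zero_iff ((hBt v).pow_const 2).ennreal_ofReal] at hF
      filter_upwards [hF] with ω h
      have h2 : (B v ω) ^ 2 ≤ 0 := by
        by_contra hc
        simp only [Pi.zero_apply, ENNReal.ofReal_eq_zero, not_le] at h hc
        linarith
      nlinarith [sq_nonneg (B v ω)]
    have h2v := hB_cov (2 * v) (by linarith) v hv0.le
    have hzero : ∫ ω, B (2 * v) ω * B v ω ∂P = 0 := by
      apply integral_eq_zero_of_ae
      filter_upwards [hBv] with ω h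
      simp [h]
    rw [hzero] at h2v
    have habs : |v - 2 * v| = v := by rw [abs_of_nonpos (by linarith)]; ring
    rw [habs, hgv] at h2v
    have hg2v : g (2 * v) = 0 := by linarith
    have : 2 * v ≤ v := le_csSup hbdd ⟨by linarith, hg2v⟩
    linarith
  have hBt : ∀ t : ℝ, Measurable (fun ω => B t ω) :=
    fun t => hB_meas.comp measurable_prodMk_left
  have hvar_eq : ∀ t, 0 ≤ t → ∫ ω, (B t ω) ^ 2 ∂P = g t := by
    intro t ht
    have h := hB_cov t ht t ht
    simp only [sub_self, abs_zero, hg_zero] at h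
    calc ∫ ω, (B t ω) ^ 2 ∂P = ∫ ω, B t ω * B t ω ∂P := by
          apply integral_congr_ae (ae_of_all _ fun ω => by ring)
      _ = g t := by rw [h]; ring
  have hint_sq : ∀ t, 0 ≤ t → Integrable (fun ω => (B t ω) ^ 2) P := by
    intro t ht
    rcases ht.lt_or_eq with h | h
    · by_contra hcon
      have h0 := integral_undef hcon
      rw [hvar_eq t ht] at h0
      exact absurd h0 (hg_pos t h).ne'
    · have : (fun ω => (B t ω) ^ 2) = fun _ => (0:ℝ) := funext fun ω => by
        rw [← h, hB_zero]; ring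
      rw [this]
      exact integrable_const 0
  have hBt : ∀ t : ℝ, Measurable (fun ω => B t ω) :=
    fun t => hB_meas.comp measurable_prodMk_left
  have hC0 : 0 ≤ C := le_trans (abs_nonneg _) (hC 0 le_rfl)
  intro T hT
  set μT := volume.restrict (Set.Ioc (0:ℝ) T) with hμT
  haveI hfin : IsFiniteMeasure μT := by
    constructor
    rw [hμT, Measure.restrict_apply_univ, Real.volume_Ioc]
    exact ENNReal.ofReal_lt_top
  have haet : ∀ᵐ t ∂μT, t ∈ Set.Ioc (0:ℝ) T := ae_restrict_mem measurableSet_Ioc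
  -- measurability on the product
  have hmeas_sq : Measurable (fun p : ℝ × Ω => (B p.1 p.2) ^ 2) := hB_meas.pow_const 2
  have hmeas_cross : Measurable (fun p : ℝ × Ω => Real.exp (b * p.1) * (B p.1 p.2 * B T p.2)) := by
    have h1 : Measurable (fun p : ℝ × Ω => Real.exp (b * p.1)) :=
      (Real.measurable_exp.comp (measurable_const.mul measurable_fst))
    exact h1.mul (hB_meas.mul ((hBt T).comp measurable_snd))
  -- product integrability of (t,ω) ↦ B t ω ^ 2
  have hint_prod_sq : Integrable (fun p : ℝ × Ω => (B p.1 p.2) ^ 2) (μT.prod P) := by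
    refine (integrable_prod_iff hmeas_sq.aestronglyMeasurable).2 ⟨?_, ?_⟩
    · filter_upwards [haet] with t ht
      exact hint_sq t ht.1.le
    · refine Integrable.mono' (integrable_const C)
        (hmeas_sq.aestronglyMeasurable.norm.integral_prod_right') ?_
      filter_upwards [haet] with t ht
      have h1 : ∫ ω, ‖(B t ω) ^ 2‖ ∂P = g t := by
        rw [← hvar_eq t ht.1.le]
        exact integral_congr_ae (ae_of_all _ fun ω => by
          simp [Real.norm_eq_abs, abs_of_nonneg (sq_nonneg (B t ω))])
      rw [h1, Real.norm_eq_abs]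
      exact hC t ht.1.le
  -- product integrability of the cross function
  have hint_prod_cross : Integrable
      (fun p : ℝ × Ω => Real.exp (b * p.1) * (B p.1 p.2 * B T p.2)) (μT.prod P) := by
    refine (integrable_prod_iff hmeas_cross.aestronglyMeasurable).2 ⟨?_, ?_⟩
    · filter_upwards [haet] with t ht
      exact (Integrable.const_mul (by
        refine Integrable.mono' (((hint_sq t ht.1.le).add (hint_sq T hT.le)).div_const 2)
          ((hBt t).aestronglyMeasurable.mul (hBt T).aestronglyMeasurable)
          (ae_of_all _ fun ω => ?_)
        rw [Real.norm_eq_abs, abs_mul]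
        simp only [Pi.add_apply]
        nlinarith [sq_nonneg (|B t ω| - |B T ω|), sq_abs (B t ω), sq_abs (B T ω),
          abs_nonneg (B t ω), abs_nonneg (B T ω)]) _)
    · refine Integrable.mono' (integrable_const (Real.exp (b * T) * C))
        (hmeas_cross.aestronglyMeasurable.norm.integral_prod_right') ?_
      filter_upwards [haet] with t ht
      have hintmul : Integrable (fun ω => B t ω * B T ω) P := by
        refine Integrable.mono' (((hint_sq t ht.1.le).add (hint_sq T hT.le)).div_const 2)
          ((hBt t).aestronglyMeasurable.mul (hBt T).aestronglyMeasurable)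
          (ae_of_all _ fun ω => ?_)
        rw [Real.norm_eq_abs, abs_mul]
        simp only [Pi.add_apply]
        nlinarith [sq_nonneg (|B t ω| - |B T ω|), sq_abs (B t ω), sq_abs (B T ω),
          abs_nonneg (B t ω), abs_nonneg (B T ω)]
      have h2 : ∫ ω, ‖Real.exp (b * t) * (B t ω * B T ω)‖ ∂P
          = Real.exp (b * t) * ∫ ω, |B t ω * B T ω| ∂P := by
        rw [← integral_const_mul]
        exact integral_congr_ae (ae_of_all _ fun ω => by
          simp [Real.norm_eq_abs, abs_mul, abs_of_pos (Real.exp_pos (b*t))])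
      rw [Real.norm_eq_abs, h2]
      have h3 : ∫ ω, |B t ω * B T ω| ∂P ≤ C := by
        have h4 : ∫ ω, |B t ω * B T ω| ∂P ≤ ∫ ω, ((B t ω) ^ 2 + (B T ω) ^ 2) / 2 ∂P := by
          refine integral_mono_ae hintmul.abs (((hint_sq t ht.1.le).add (hint_sq T hT.le)).div_const 2)
            (ae_of_all _ fun ω => ?_)
          simp only [abs_mul]
          nlinarith [sq_nonneg (|B t ω| - |B T ω|), sq_abs (B t ω), sq_abs (B T ω),
            abs_nonneg (B t ω), abs_nonneg (B T ω)]
        have h5 : ∫ ω, ((B t ω) ^ 2 + (B T ω) ^ 2) / 2 ∂P = (g t + g T) / 2 := by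
          rw [integral_div, integral_add (hint_sq t ht.1.le) (hint_sq T hT.le),
            hvar_eq t ht.1.le, hvar_eq T hT.le]
        rw [h5] at h4
        have := hC t ht.1.le
        have := hC T hT.le
        have := abs_le.1 (hC t ht.1.le)
        have := abs_le.1 (hC T hT.le)
        linarith
      have hexple : Real.exp (b * t) ≤ Real.exp (b * T) :=
        Real.exp_le_exp.2 (by nlinarith [ht.2, hb])
      have hintabs_nonneg : 0 ≤ ∫ ω, |B t ω * B T ω| ∂P :=
        integral_nonneg fun ω => abs_nonneg _
      rw [abs_of_nonneg (by positivity)]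
      nlinarith [Real.exp_pos (b * t)]
  -- Fubini for the cross term
  have key : ∫ ω, (B T ω) * (∫ t, Real.exp (b * t) * B t ω ∂μT) ∂P
      = ∫ t, Real.exp (b * t) * ((g T + g t - g (T - t)) / 2) ∂μT := by
    have h1 : ∫ ω, (B T ω) * (∫ t, Real.exp (b * t) * B t ω ∂μT) ∂P
        = ∫ ω, ∫ t, Real.exp (b * t) * (B t ω * B T ω) ∂μT ∂P := by
      refine integral_congr_ae (ae_of_all _ fun ω => ?_)
      show B T ω * ∫ t, Real.exp (b * t) * B t ω ∂μT
        = ∫ t, Real.exp (b * t) * (B t ω * B T ω) ∂μT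
      rw [← integral_const_mul]
      exact integral_congr_ae (ae_of_all _ fun t => by ring)
    rw [h1, ← integral_integral_swap (f := fun t ω => Real.exp (b * t) * (B t ω * B T ω))
      hint_prod_cross]
    refine integral_congr_ae ?_
    filter_upwards [haet] with t ht
    rw [integral_const_mul, hB_cov t ht.1.le T hT.le,
      abs_of_nonneg (sub_nonneg.2 ht.2)]
  -- representation of U over μT
  have hUrep : ∀ ω, U T ω = Real.exp (-b * T) * ∫ t, Real.exp (b * t) * B t ω ∂μT := by
    intro ω
    rw [hU T ω, intervalIntegral.integral_of_le hT.le]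
  have hI_sm : StronglyMeasurable (fun ω => ∫ t, Real.exp (b * t) * B t ω ∂μT) := by
    have h1 : StronglyMeasurable (fun p : ℝ × Ω => Real.exp (b * p.1) * B p.1 p.2) :=
      ((Real.measurable_exp.comp (measurable_const.mul measurable_fst)).mul hB_meas).stronglyMeasurable
    exact h1.integral_prod_left'
  have hUaesm : AEStronglyMeasurable (U T) P := by
    have h2 : U T = fun ω => Real.exp (-b * T) * ∫ t, Real.exp (b * t) * B t ω ∂μT := funext hUrep
    rw [h2]
    exact ((stronglyMeasurable_const.mul hI_sm)).aestronglyMeasurable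
  -- integrability of U^2
  have hJ_int : Integrable (fun ω => ∫ t, (B t ω) ^ 2 ∂μT) P := hint_prod_sq.integral_prod_right
  set k := ∫ t, (Real.exp (b * t)) ^ 2 ∂μT with hk
  have hexp_cont : Continuous (fun t : ℝ => Real.exp (b * t)) :=
    Real.continuous_exp.comp (continuous_const.mul continuous_id)
  have hknn : 0 ≤ k := integral_nonneg fun t => sq_nonneg _
  have hexp_mem : MemLp (fun t : ℝ => Real.exp (b * t)) (ENNReal.ofReal 2) μT := by
    rw [(by norm_num : ENNReal.ofReal 2 = 2)]
    refine (memLp_two_iff_integrable_sq hexp_cont.aestronglyMeasurable).2 ?_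
    exact (hexp_cont.pow 2).integrableOn_Ioc
  have hU2_bound : ∀ᵐ ω ∂P, ‖(U T ω) ^ 2‖
      ≤ (Real.exp (-b * T) ^ 2 * k) * ∫ t, (B t ω) ^ 2 ∂μT := by
    filter_upwards [hB_cont] with ω hω
    have hJnn : 0 ≤ ∫ t, (B t ω) ^ 2 ∂μT := integral_nonneg fun t => sq_nonneg _
    have habs_mem : MemLp (fun t => |B t ω|) (ENNReal.ofReal 2) μT := by
      rw [(by norm_num : ENNReal.ofReal 2 = 2)]
      refine (memLp_two_iff_integrable_sq (hω.abs.aestronglyMeasurable)).2 ?_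
      exact ((hω.abs).pow 2).integrableOn_Ioc
    have hhold := integral_mul_le_Lp_mul_Lq_of_nonneg (μ := μT)
      Real.HolderConjugate.two_two
      (ae_of_all _ fun t => (Real.exp_pos _).le) (ae_of_all _ fun t => abs_nonneg _)
      hexp_mem habs_mem
    have hrw1 : ∫ t, Real.exp (b * t) ^ (2:ℝ) ∂μT = k := by
      refine integral_congr_ae (ae_of_all _ fun t => ?_)
      exact Real.rpow_two _
    have hrw2 : ∫ t, |B t ω| ^ (2:ℝ) ∂μT = ∫ t, (B t ω) ^ 2 ∂μT := by
      refine integral_congr_ae (ae_of_all _ fun t => ?_)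
      show |B t ω| ^ (2:ℝ) = B t ω ^ 2
      rw [Real.rpow_two, sq_abs]
    rw [hrw1, hrw2] at hhold
    have hUb : |U T ω| ≤ Real.exp (-b * T)
        * (k ^ ((1:ℝ)/2) * (∫ t, (B t ω) ^ 2 ∂μT) ^ ((1:ℝ)/2)) := by
      rw [hUrep ω, abs_mul, abs_of_pos (Real.exp_pos _)]
      refine mul_le_mul_of_nonneg_left (le_trans ?_ hhold) (Real.exp_pos _).le
      calc |∫ t, Real.exp (b * t) * B t ω ∂μT|
          ≤ ∫ t, ‖Real.exp (b * t) * B t ω‖ ∂μT := by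
            rw [← Real.norm_eq_abs]; exact norm_integral_le_integral_norm _
        _ = ∫ t, Real.exp (b * t) * |B t ω| ∂μT := integral_congr_ae (ae_of_all _ fun t => by
            simp [Real.norm_eq_abs, abs_mul, abs_of_pos (Real.exp_pos (b * t))])
    have hsq : (k ^ ((1:ℝ)/2) * (∫ t, (B t ω) ^ 2 ∂μT) ^ ((1:ℝ)/2)) ^ 2
        = k * ∫ t, (B t ω) ^ 2 ∂μT := by
      rw [mul_pow, ← Real.rpow_natCast (k ^ ((1:ℝ)/2)) 2,
        ← Real.rpow_natCast ((∫ t, (B t ω) ^ 2 ∂μT) ^ ((1:ℝ)/2)) 2,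
        ← Real.rpow_mul hknn, ← Real.rpow_mul hJnn]
      norm_num
    have hgoal : (U T ω) ^ 2 ≤ (Real.exp (-b * T) ^ 2 * k) * ∫ t, (B t ω) ^ 2 ∂μT := by
      calc (U T ω) ^ 2 = |U T ω| ^ 2 := (sq_abs _).symm
        _ ≤ (Real.exp (-b * T) * (k ^ ((1:ℝ)/2) * (∫ t, (B t ω) ^ 2 ∂μT) ^ ((1:ℝ)/2))) ^ 2 :=
            pow_le_pow_left₀ (abs_nonneg _) hUb 2
        _ = Real.exp (-b * T) ^ 2 * (k * ∫ t, (B t ω) ^ 2 ∂μT) := by rw [mul_pow, hsq]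
        _ = (Real.exp (-b * T) ^ 2 * k) * ∫ t, (B t ω) ^ 2 ∂μT := by ring
    simpa [Real.norm_eq_abs, abs_of_nonneg (sq_nonneg (U T ω))] using hgoal
  have hU2int : Integrable (fun ω => (U T ω) ^ 2) P := by
    refine Integrable.mono' (hJ_int.const_mul (Real.exp (-b * T) ^ 2 * k)) ?_ hU2_bound
    exact (hUaesm.mul hUaesm).congr (ae_of_all _ fun ω => by
      show U T ω * U T ω = U T ω ^ 2
      rw [sq])
  have hintBU : Integrable (fun ω => B T ω * U T ω) P := by
    refine Integrable.mono' (((hint_sq T hT.le).add hU2int).div_const 2)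
      ((hBt T).aestronglyMeasurable.mul hUaesm) (ae_of_all _ fun ω => ?_)
    rw [Real.norm_eq_abs, abs_mul]
    simp only [Pi.add_apply]
    nlinarith [sq_nonneg (|B T ω| - |U T ω|), sq_abs (B T ω), sq_abs (U T ω),
      abs_nonneg (B T ω), abs_nonneg (U T ω)]
  -- expansion of the square
  have hsplit : ∫ ω, (V T ω) ^ 2 ∂P
      = (∫ ω, (B T ω) ^ 2 ∂P + b ^ 2 * ∫ ω, (U T ω) ^ 2 ∂P)
        - 2 * b * ∫ ω, B T ω * U T ω ∂P := by
    have e : ∫ ω, (V T ω) ^ 2 ∂P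
        = ∫ ω, (((B T ω) ^ 2 + b ^ 2 * (U T ω) ^ 2) - 2 * b * (B T ω * U T ω)) ∂P :=
      integral_congr_ae (ae_of_all _ fun ω => by simp only [hV]; ring)
    have hI1 : Integrable (fun ω => (B T ω) ^ 2 + b ^ 2 * (U T ω) ^ 2) P :=
      (hint_sq T hT.le).add (hU2int.const_mul (b ^ 2))
    have hI2 : Integrable (fun ω => 2 * b * (B T ω * U T ω)) P := hintBU.const_mul (2 * b)
    have hI3 : Integrable (fun ω => b ^ 2 * (U T ω) ^ 2) P := hU2int.const_mul (b ^ 2)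
    rw [e, integral_sub hI1 hI2, integral_add (hint_sq T hT.le) hI3,
      integral_const_mul, integral_const_mul]
  -- value of the cross term
  have hcross_val : ∫ ω, B T ω * U T ω ∂P
      = Real.exp (-b * T) * ∫ t, Real.exp (b * t) * ((g T + g t - g (T - t)) / 2) ∂μT := by
    have e : ∫ ω, B T ω * U T ω ∂P
        = ∫ ω, Real.exp (-b * T) * (B T ω * ∫ t, Real.exp (b * t) * B t ω ∂μT) ∂P :=
      integral_congr_ae (ae_of_all _ fun ω => by
        show B T ω * U T ω = _
        rw [hUrep ω]; ring)
    rw [e, integral_const_mul, key]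
  -- calculus
  have hgIcc : ContinuousOn g (Set.Icc 0 T) := hg_cont.mono fun x hx => hx.1
  have huIcc : Set.uIcc (0:ℝ) T = Set.Icc 0 T := Set.uIcc_of_le hT.le
  have i1 : IntervalIntegrable (fun t => Real.exp (b * t)) volume 0 T :=
    hexp_cont.intervalIntegrable 0 T
  have i2 : IntervalIntegrable (fun t => Real.exp (b * t) * g t) volume 0 T := by
    apply ContinuousOn.intervalIntegrable
    rw [huIcc]
    exact hexp_cont.continuousOn.mul hgIcc
  have i3 : IntervalIntegrable (fun t => Real.exp (b * t) * g (T - t)) volume 0 T := by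
    apply ContinuousOn.intervalIntegrable
    rw [huIcc]
    refine hexp_cont.continuousOn.mul (hg_cont.comp
      (continuous_const.sub continuous_id).continuousOn fun x hx => ?_)
    exact sub_nonneg.2 hx.2
  have i1' : IntervalIntegrable (fun t => Real.exp (b * t) * g T) volume 0 T := i1.mul_const _
  have e1 : ∫ t in (0:ℝ)..T, Real.exp (b * t) = (Real.exp (b * T) - 1) / b := by
    rw [intervalIntegral.integral_comp_mul_left (fun x => Real.exp x) hb.ne', integral_exp]
    rw [smul_eq_mul, mul_zero, Real.exp_zero]
    ring
  have e3 : ∫ t in (0:ℝ)..T, Real.exp (b * t) * g (T - t)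
      = Real.exp (b * T) * ∫ s in (0:ℝ)..T, Real.exp (-b * s) * g s := by
    calc ∫ t in (0:ℝ)..T, Real.exp (b * t) * g (T - t)
        = ∫ t in (0:ℝ)..T, (fun s => Real.exp (b * (T - s)) * g s) (T - t) := by
          refine intervalIntegral.integral_congr fun x _ => ?_
          simp [sub_sub_cancel]
      _ = ∫ s in T - T..T - 0, Real.exp (b * (T - s)) * g s := by
          exact intervalIntegral.integral_comp_sub_left (fun s => Real.exp (b * (T - s)) * g s) T
      _ = ∫ s in (0:ℝ)..T, Real.exp (b * T) * (Real.exp (-b * s) * g s) := by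
          rw [sub_self, sub_zero]
          refine intervalIntegral.integral_congr fun x _ => ?_
          have hx : b * (T - x) = b * T + -b * x := by ring
          rw [hx, Real.exp_add, mul_assoc]
      _ = Real.exp (b * T) * ∫ s in (0:ℝ)..T, Real.exp (-b * s) * g s :=
          intervalIntegral.integral_const_mul _ _
  have hS : ∫ t, Real.exp (b * t) * ((g T + g t - g (T - t)) / 2) ∂μT
      = (g T * ((Real.exp (b * T) - 1) / b)
          + (∫ s in (0:ℝ)..T, Real.exp (b * s) * g s)
          - Real.exp (b * T) * (∫ s in (0:ℝ)..T, Real.exp (-b * s) * g s)) / 2 := by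
    rw [hμT, ← intervalIntegral.integral_of_le hT.le]
    have e : (fun t => Real.exp (b * t) * ((g T + g t - g (T - t)) / 2))
        = fun t => (Real.exp (b * t) * g T + Real.exp (b * t) * g t
            - Real.exp (b * t) * g (T - t)) / 2 := funext fun t => by ring
    rw [e, intervalIntegral.integral_div,
      intervalIntegral.integral_sub (i1'.add i2) i3,
      intervalIntegral.integral_add i1' i2,
      intervalIntegral.integral_mul_const, e1, e3]
    ring
  -- final algebra
  rw [hsplit, hvar_eq T hT.le, hcross_val, hS]
  have hac : Real.exp (-b * T) * Real.exp (b * T) = 1 := by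
    rw [← Real.exp_add, neg_mul, neg_add_cancel, Real.exp_zero]
  have hbinv : b * b⁻¹ = 1 := mul_inv_cancel₀ hb.ne'
  linear_combination (b * (∫ s in (0:ℝ)..T, Real.exp (-b * s) * g s) - g T) * hac
    + (g T * Real.exp (-b * T) - g T * Real.exp (-b * T) * Real.exp (b * T)) * hbinv
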